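/- For d = 3 and λ ≥ 2/√3, the quantity μ = (3λ² + λ√(9λ² − 12) + 4)/√(18λ² + 6λ√(9λ² − 12)) satisfies the fixed-point equation μ = φ₃(μ, λ), where φ₃(z, λ) = λ·ω₃(z, λ)³ − ½m₃(z/2), ω₃(z, λ) = (1/λ)(z + (1/3)m₃(z/2)), and m₃(z) = −3z + 3√(z² − 2/3). -/

import Mathlib

/-- `m₃(z) = −3z + 3√(z² − 2/3)`. -/
noncomputable def m3 (z : ℝ) : ℝ := -3 * z + 3 * Real.sqrt (z ^ 2 - 2 / 3)

/-- for `λ ≥ 2/√3`, the explicit value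
`μ = (3λ² + λ√(9λ² − 12) + 4)/√(18λ² + 6λ√(9λ² − 12))` satisfies the fixed-point
equation `μ = φ₃(μ, λ)` with `φ₃(z, λ) = λ·ω₃(z,λ)³ − ½ m₃(z/2)` and
`ω₃(z, λ) = (1/λ)(z + (1/3) m₃(z/2))`. -/
theorem stmt12 (lam : ℝ) (hlam : 2 / Real.sqrt 3 ≤ lam) :
    letI μ : ℝ := (3 * lam ^ 2 + lam * Real.sqrt (9 * lam ^ 2 - 12) + 4) /
      Real.sqrt (18 * lam ^ 2 + 6 * lam * Real.sqrt (9 * lam ^ 2 - 12))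
    letI ω : ℝ := (1 / lam) * (μ + (1 / 3) * m3 (μ / 2))
    μ = lam * ω ^ 3 - (1 / 2) * m3 (μ / 2) := by
  have h3 : (0:ℝ) < Real.sqrt 3 := Real.sqrt_pos.mpr (by norm_num)
  have hlpos : 0 < lam := lt_of_lt_of_le (by positivity) hlam
  have hl2 : (4:ℝ)/3 ≤ lam ^ 2 := by
    have h := mul_self_le_mul_self (by positivity) hlam
    have h2 : (2 / Real.sqrt 3) * (2 / Real.sqrt 3) = 4/3 := by
      rw [div_mul_div_comm]
      rw [Real.mul_self_sqrt (by norm_num)]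
      norm_num
    nlinarith
  set s := Real.sqrt (9 * lam ^ 2 - 12) with hsdef
  have hs0 : 0 ≤ s := Real.sqrt_nonneg _
  have hs2 : s ^ 2 = 9 * lam ^ 2 - 12 := Real.sq_sqrt (by nlinarith)
  set r := Real.sqrt (18 * lam ^ 2 + 6 * lam * s) with hrdef
  have hDpos : (0:ℝ) < 18 * lam ^ 2 + 6 * lam * s := by nlinarith [mul_nonneg hlpos.le hs0]
  have hr0 : 0 < r := Real.sqrt_pos.mpr hDpos
  have hr2 : r ^ 2 = 18 * lam ^ 2 + 6 * lam * s := Real.sq_sqrt hDpos.le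
  set μ := (3 * lam ^ 2 + lam * s + 4) / r with hμ
  have hA : 4 ≤ 3 * lam ^ 2 + lam * s := by nlinarith [mul_nonneg hlpos.le hs0]
  have hsqrt : Real.sqrt ((μ / 2) ^ 2 - 2 / 3)
      = (3 * lam ^ 2 + lam * s - 4) / (2 * r) := by
    have key : (μ / 2) ^ 2 - 2 / 3 = ((3 * lam ^ 2 + lam * s - 4) / (2 * r)) ^ 2 := by
      rw [hμ]
      field_simp
      linear_combination (-8) * hr2
    rw [key, Real.sqrt_sq (div_nonneg (by linarith) (by positivity))]
  have hm : m3 (μ / 2) = -12 / r := by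
    rw [m3, hsqrt, hμ]
    field_simp
    ring
  rw [hm, hμ]
  field_simp
  linear_combination ((-108)*lam^2 + (54)*lam^3*s^1 + (162)*lam^4) * hr2 + ((-54)*lam^3*s^1 + (-162)*lam^4) * hs2
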